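/- Let X be a compact metric space and suppose the open ball B(x,r) contains an n-proper point for some n > 1. Then B(x,r) contains infinitely many (n−1)-proper points, and for every k there exist k pairwise formally disjoint basic open balls formally enclosed in B(x,r), each containing an (n−1)-proper point. -/

import Mathlib

/-- A point is `Proper1` ("1-proper") if every neighbourhood is intersected by
infinitely many pairwise disjoint clopen subsets of the space. -/
def Proper1 {X : Type*} [TopologicalSpace X] (x : X) : Prop :=
  ∀ U ∈ nhds x, ∃ C : ℕ → Set X, (∀ i, IsClopen (C i)) ∧
    Pairwise (Function.onFun Disjoint C) ∧ ∀ i, (C i ∩ U).Nonempty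

/-- `NProper n x` : `x` is `n`-proper (for `n ≥ 1`; `NProper 0` is trivially true).
For `n > 1`, `x` is `n`-proper if every neighbourhood of `x` contains infinitely
many `(n-1)`-proper points. -/
def NProper {X : Type*} [TopologicalSpace X] : ℕ → X → Prop
  | 0, _ => True
  | 1, x => Proper1 x
  | (n+2), x => ∀ U ∈ nhds x, {y : X | y ∈ U ∧ NProper (n+1) y}.Infinite

/-- In a compact metric space with a dense sequence of special points,
if the open ball B(x,r) contains an n-proper point (n > 1), then it contains
infinitely many (n−1)-proper points, and for every k there exist k pairwise formally
disjoint basic open balls formally enclosed in B(x,r), each containing an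
(n−1)-proper point. -/
theorem stmt_19 {X : Type*} [MetricSpace X] [CompactSpace X]
    (xs : ℕ → X) (hxs : Dense (Set.range xs))
    (x : X) (r : ℝ) (n : ℕ) (hn : 1 < n)
    (h : ∃ z ∈ Metric.ball x r, NProper n z) :
    {y : X | y ∈ Metric.ball x r ∧ NProper (n - 1) y}.Infinite ∧
    ∀ k : ℕ, ∃ (c : Fin k → ℕ) (ρ : Fin k → ℚ),
      (∀ i, (0 : ℚ) < ρ i) ∧
      (∀ i j, i ≠ j → dist (xs (c i)) (xs (c j)) > (ρ i : ℝ) + (ρ j : ℝ)) ∧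
      (∀ i, dist (xs (c i)) x + (ρ i : ℝ) < r) ∧
      (∀ i, ∃ z ∈ Metric.ball (xs (c i)) ((ρ i : ℝ)), NProper (n - 1) z) := by
  obtain ⟨m, rfl⟩ : ∃ m, n = m + 2 := ⟨n - 2, by omega⟩
  obtain ⟨z, hzball, hz⟩ := h
  have hS : {y : X | y ∈ Metric.ball x r ∧ NProper (m + 1) y}.Infinite :=
    hz (Metric.ball x r) (Metric.isOpen_ball.mem_nhds hzball)
  have hsub : (m + 2 - 1) = m + 1 := rfl
  refine ⟨by rw [hsub]; exact hS, ?_⟩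
  intro k
  rcases Nat.eq_zero_or_pos k with hk | hk
  · subst hk
    exact ⟨fun i => i.elim0, fun i => i.elim0, fun i => i.elim0, fun i => i.elim0,
      fun i => i.elim0, fun i => i.elim0⟩
  have hne : Nonempty (Fin k) := Fin.pos_iff_nonempty.mp hk
  -- pick k distinct points from the infinite set
  set e := hS.natEmbedding with he
  set z' : Fin k → X := fun i => (e (i : ℕ) : X) with hz'
  have hz'mem : ∀ i, z' i ∈ Metric.ball x r ∧ NProper (m + 1) (z' i) := fun i => (e (i : ℕ)).2
  have hz'inj : Function.Injective z' := by
    intro i j hij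
    exact Fin.val_injective (e.injective (Subtype.ext hij))
  -- choose a small ε
  set m₁ : ℝ := Finset.univ.inf' (Finset.univ_nonempty) (fun i => r - dist (z' i) x) with hm₁
  set g : Fin k × Fin k → ℝ := fun p => if p.1 = p.2 then 1 else dist (z' p.1) (z' p.2) with hg
  set m₂ : ℝ := Finset.univ.inf' (Finset.univ_nonempty) g with hm₂
  have hm₁pos : 0 < m₁ := by
    rw [hm₁, Finset.lt_inf'_iff]
    intro i _
    have := (hz'mem i).1
    rw [Metric.mem_ball] at this
    linarith
  have hm₂pos : 0 < m₂ := by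
    rw [hm₂, Finset.lt_inf'_iff]
    intro p _
    rw [hg]
    by_cases hp : p.1 = p.2
    · simp [hp]
    · simp only [hp, if_false]
      exact dist_pos.mpr (fun hc => hp (hz'inj hc))
  set ε : ℝ := min m₁ m₂ / 4 with hε
  have hεpos : 0 < ε := by positivity
  have hε1 : ∀ i, 3 * ε < r - dist (z' i) x := by
    intro i
    have h1 : m₁ ≤ r - dist (z' i) x := Finset.inf'_le _ (Finset.mem_univ i)
    have h2 : min m₁ m₂ ≤ m₁ := min_le_left _ _
    have h3 : 0 < min m₁ m₂ := lt_min hm₁pos hm₂pos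
    rw [hε]; linarith
  have hε2 : ∀ i j, i ≠ j → 3 * ε < dist (z' i) (z' j) := by
    intro i j hij
    have h1 : m₂ ≤ g (i, j) := Finset.inf'_le _ (Finset.mem_univ (i, j))
    have h2 : g (i, j) = dist (z' i) (z' j) := by rw [hg]; simp [hij]
    have h3 : min m₁ m₂ ≤ m₂ := min_le_right _ _
    have h4 : 0 < min m₁ m₂ := lt_min hm₁pos hm₂pos
    rw [hε]; linarith [h2 ▸ h1]
  -- choose special centers near the z' i
  have hcenters : ∀ i : Fin k, ∃ c : ℕ, dist (z' i) (xs c) < ε / 2 := by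
    intro i
    obtain ⟨y, hy1, hy2⟩ := Metric.dense_iff.mp hxs (z' i) (ε / 2) (by positivity)
    obtain ⟨c, rfl⟩ := hy2
    exact ⟨c, Metric.mem_ball'.mp hy1⟩
  choose c hc using hcenters
  -- choose rational radii
  have hradii : ∀ i : Fin k, ∃ ρ : ℚ, ε / 2 < (ρ : ℝ) ∧ (ρ : ℝ) < ε := by
    intro i
    exact_mod_cast exists_rat_btwn (by linarith : ε / 2 < ε)
  choose ρ hρ1 hρ2 using hradii
  refine ⟨c, ρ, ?_, ?_, ?_, ?_⟩
  · intro i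
    have := hρ1 i
    have : (0 : ℝ) < (ρ i : ℝ) := by linarith
    exact_mod_cast this
  · intro i j hij
    have h1 := hc i
    have h2 := hc j
    have h3 := hε2 i j hij
    have h4 : dist (z' i) (z' j) ≤ dist (z' i) (xs (c i)) + dist (xs (c i)) (xs (c j)) +
        dist (xs (c j)) (z' j) := dist_triangle4 _ _ _ _
    have h5 : dist (xs (c j)) (z' j) = dist (z' j) (xs (c j)) := dist_comm _ _
    have := hρ2 i; have := hρ2 j
    linarith
  · intro i
    have h1 := hc i
    have h2 : dist (xs (c i)) x ≤ dist (xs (c i)) (z' i) + dist (z' i) x := dist_triangle _ _ _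
    have h3 : dist (xs (c i)) (z' i) = dist (z' i) (xs (c i)) := dist_comm _ _
    have h4 := hε1 i
    have := hρ2 i
    linarith
  · intro i
    refine ⟨z' i, ?_, (hz'mem i).2⟩
    rw [Metric.mem_ball]
    have := hρ1 i
    linarith [hc i]
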